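/- Let A_i and A_j be symmetric 2n×2n real matrices. Then (J A_i v, A_j v) = 0 for all v ∈ ℝ^{2n} if and only if the matrices J A_i and J A_j commute: [J A_i, J A_j] = 0. Consequently, the restrictions H_i, H_j of the quadratic functions g_i(X) = (1/2)(A_i X_v, X_v) + x_0 x_{n+1} and g_j(X) = (1/2)(A_j X_v, X_v) + x_0 x_{n+1} to the coadjoint orbits M_{x_{n+1}} — where their Poisson bracket equals {H_i,H_j}(X) = x_{n+1} (J A_i X_v, A_j X_v) — are in involution on the orbits M_{x_{n+1}} if and only if [J A_i, J A_j] = 0. -/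

import Mathlib

open Matrix

noncomputable section

/-- The canonical complex structure `J = [[0, -I],[I, 0]]` on `ℝ^{2n}`. -/
def Jmat (n : ℕ) : Matrix (Fin n ⊕ Fin n) (Fin n ⊕ Fin n) ℝ :=
  Matrix.fromBlocks 0 (-1) 1 0

lemma quad_zero_iff_antisymm {m : Type*} [Fintype m] [DecidableEq m]
    (M : Matrix m m ℝ) :
    (∀ v : m → ℝ, v ⬝ᵥ (M *ᵥ v) = 0) ↔ M + Mᵀ = 0 := by
  constructor
  · intro h
    ext i j
    have hdiag : ∀ k, M k k = 0 := fun k => by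
      simpa [mulVec_single] using h (Pi.single k 1)
    have := h (Pi.single i 1 + Pi.single j 1)
    simp [mulVec_add, dotProduct_add, add_dotProduct, mulVec_single, hdiag] at this
    simp [Matrix.transpose_apply]
    linarith [this]
  · intro h v
    have hT : Mᵀ = -M := by linear_combination (norm := noncomm_ring) h
    have h1 : v ⬝ᵥ (M *ᵥ v) = (Mᵀ *ᵥ v) ⬝ᵥ v := by
      rw [dotProduct_mulVec, mulVec_transpose]
    rw [hT] at h1
    simp [neg_mulVec, dotProduct_comm] at h1
    linarith

lemma Jmat_transpose (n : ℕ) : (Jmat n)ᵀ = -Jmat n := by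
  rw [Jmat, fromBlocks_transpose, fromBlocks_neg]
  simp

lemma Jmat_sq (n : ℕ) : Jmat n * Jmat n = -1 := by
  rw [Jmat, fromBlocks_multiply, show (-1 : Matrix (Fin n ⊕ Fin n) (Fin n ⊕ Fin n) ℝ) = fromBlocks (-1) (-0) (-0) (-1) by rw [(fromBlocks_neg _ _ _ _).symm, fromBlocks_one]]
  ext (i|j) (k|l) <;> simp

/-- For symmetric matrices `A_i, A_j`, one has `(J A_i v, A_j v) = 0` for all `v` iff
`[J A_i, J A_j] = 0`. Consequently, the restrictions `H_i, H_j` of the quadratic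
functions `g_i, g_j` to the coadjoint orbits `M_{x_{n+1}}` — whose Poisson bracket at
`X` is `x_{n+1} (J A_i X_v, A_j X_v)` — are in involution on the orbits `M_{x_{n+1}}`
iff `[J A_i, J A_j] = 0`. -/
theorem quadratic_involution_iff_commute (n : ℕ)
    (Ai Aj : Matrix (Fin n ⊕ Fin n) (Fin n ⊕ Fin n) ℝ)
    (hAi : Ai.IsSymm) (hAj : Aj.IsSymm) :
    ((∀ v : (Fin n ⊕ Fin n) → ℝ, ((Jmat n * Ai) *ᵥ v) ⬝ᵥ (Aj *ᵥ v) = 0)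
      ↔ (Jmat n * Ai) * (Jmat n * Aj) = (Jmat n * Aj) * (Jmat n * Ai))
    ∧ ((∀ (c : ℝ) (v : (Fin n ⊕ Fin n) → ℝ),
          c * (((Jmat n * Ai) *ᵥ v) ⬝ᵥ (Aj *ᵥ v)) = 0)
      ↔ (Jmat n * Ai) * (Jmat n * Aj) = (Jmat n * Aj) * (Jmat n * Ai)) := by
  have hform : ∀ v : (Fin n ⊕ Fin n) → ℝ,
      ((Jmat n * Ai) *ᵥ v) ⬝ᵥ (Aj *ᵥ v)
        = v ⬝ᵥ (((Jmat n * Ai)ᵀ * Aj) *ᵥ v) := by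
    intro v
    symm
    rw [← mulVec_mulVec, dotProduct_mulVec, vecMul_transpose]
  have hJ : Jmat n * Jmat n = -1 := Jmat_sq n
  have hanti : (Jmat n * Ai)ᵀ * Aj + ((Jmat n * Ai)ᵀ * Aj)ᵀ = 0
      ↔ Ai * Jmat n * Aj = Aj * Jmat n * Ai := by
    have hL : (Jmat n * Ai)ᵀ * Aj + ((Jmat n * Ai)ᵀ * Aj)ᵀ
        = -(Ai * Jmat n * Aj) + Aj * Jmat n * Ai := by
      simp only [transpose_mul, transpose_transpose, transpose_neg, hAi.eq, hAj.eq,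
        Jmat_transpose]
      noncomm_ring
    rw [hL]
    exact neg_add_eq_zero
  have hcomm : Ai * Jmat n * Aj = Aj * Jmat n * Ai
      ↔ (Jmat n * Ai) * (Jmat n * Aj) = (Jmat n * Aj) * (Jmat n * Ai) := by
    constructor
    · intro h
      calc (Jmat n * Ai) * (Jmat n * Aj) = Jmat n * (Ai * Jmat n * Aj) := by
            noncomm_ring
        _ = Jmat n * (Aj * Jmat n * Ai) := by rw [h]
        _ = (Jmat n * Aj) * (Jmat n * Ai) := by noncomm_ring
    · intro h
      have h2 := congrArg (fun X => Jmat n * X) h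
      change Jmat n * ((Jmat n * Ai) * (Jmat n * Aj)) = Jmat n * ((Jmat n * Aj) * (Jmat n * Ai)) at h2
      have e1 : Jmat n * ((Jmat n * Ai) * (Jmat n * Aj))
          = (Jmat n * Jmat n) * (Ai * Jmat n * Aj) := by noncomm_ring
      have e2 : Jmat n * ((Jmat n * Aj) * (Jmat n * Ai))
          = (Jmat n * Jmat n) * (Aj * Jmat n * Ai) := by noncomm_ring
      rw [e1, e2, hJ] at h2
      simpa [neg_mul] using h2
  have key : (∀ v : (Fin n ⊕ Fin n) → ℝ, ((Jmat n * Ai) *ᵥ v) ⬝ᵥ (Aj *ᵥ v) = 0)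
      ↔ (Jmat n * Ai) * (Jmat n * Aj) = (Jmat n * Aj) * (Jmat n * Ai) := by
    rw [show (∀ v : (Fin n ⊕ Fin n) → ℝ, ((Jmat n * Ai) *ᵥ v) ⬝ᵥ (Aj *ᵥ v) = 0)
        ↔ (∀ v : (Fin n ⊕ Fin n) → ℝ, v ⬝ᵥ (((Jmat n * Ai)ᵀ * Aj) *ᵥ v) = 0) from
      forall_congr' fun v => by rw [hform v]]
    rw [quad_zero_iff_antisymm, hanti, hcomm]
  refine ⟨key, ?_⟩
  rw [← key]
  constructor
  · intro h v
    simpa using h 1 v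
  · intro h c v
    rw [h v, mul_zero]
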